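/- arXiv:1805.06294 — 2 statements merged into one kernel-verified Lean document; each statement's English description precedes it below -/
import Mathlib

section
/- Let Ω ⊆ ℝ^d be open and connected, and let f : Ω → ℝ be continuous. Suppose that for all x ∈ Ω and all h ∈ ℝ^d with |h| < dist(x, ∂Ω) one has f(x) = (f(x+h) + f(x-h))/2. Then f is affine on Ω, i.e., there exist a ∈ ℝ and b ∈ ℝ^d such that f(x) = a + b · x for all x ∈ Ω. -/
open MeasureTheory Metric Filter
open scoped FourierTransform ENNReal NNReal Topology RealInnerProductSpace Convolution

noncomputable section

/-- `ℝ^d` as a Euclidean space. -/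
abbrev Euc (d : ℕ) := EuclideanSpace ℝ (Fin d)

/-- The radius of the centered open ball with the same volume as `A`. -/
def symmRadius {d : ℕ} (A : Set (Euc d)) : ℝ :=
  sInf {r : ℝ | 0 ≤ r ∧ volume A ≤ volume (ball (0 : Euc d) r)}

/-- The symmetric rearrangement `A*` of a set `A ⊆ ℝ^d`: the centered open ball
with the same Lebesgue measure. -/
def setRearr {d : ℕ} (A : Set (Euc d)) : Set (Euc d) := ball 0 (symmRadius A)

/-- The symmetric-decreasing rearrangement `g*` of a function, via the layer-cake formula
`g*(x) = ∫₀^∞ 1_{{|g|>t}*}(x) dt`. -/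
def symmDecr {d : ℕ} {F : Type*} [NormedAddCommGroup F] (g : Euc d → F) (x : Euc d) : ℝ :=
  ∫ t in Set.Ioi (0:ℝ), (setRearr {y | t < ‖g y‖}).indicator (fun _ => (1:ℝ)) x

/-- `u` is the (tempered-distributional) Fourier transform of `f`, characterized by
Parseval's relation against Schwartz functions. -/
def HasFT {d : ℕ} (f u : Euc d → ℂ) : Prop :=
  ∀ φ : SchwartzMap (Euc d) ℂ, ∫ x, f x * 𝓕 (⇑φ) x = ∫ ξ, u ξ * φ ξ


lemma aux_linear {d : ℕ} (ρ : ℝ) (hρ : 0 < ρ) (g : Euc d → ℝ)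
    (hcont : ContinuousAt g 0)
    (hadd : ∀ y z : Euc d, ‖y‖ < ρ → ‖z‖ < ρ → g (y + z) = g y + g z) :
    ∃ b : Euc d, ∀ y : Euc d, ‖y‖ < ρ → g y = ⟪b, y⟫ := by
  have hg0 : g 0 = 0 := by
    have := hadd 0 0 (by simpa using hρ) (by simpa using hρ)
    simp at this; linarith
  -- nat scaling
  have hscale : ∀ n : ℕ, ∀ y : Euc d, (n : ℝ) * ‖y‖ < ρ → g ((n : ℝ) • y) = n * g y := by
    intro n
    induction n with
    | zero => intro y _; simp [hg0]
    | succ n ih =>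
      intro y hy
      have hny : (n : ℝ) ≥ 0 := Nat.cast_nonneg n
      push_cast at hy
      have h1 : ‖y‖ < ρ := by nlinarith [norm_nonneg y]
      have h2 : (n : ℝ) * ‖y‖ < ρ := by nlinarith [norm_nonneg y]
      have h3 : ‖(n : ℝ) • y‖ < ρ := by
        rw [norm_smul, Real.norm_natCast]; exact h2
      have hrw : ((n + 1 : ℕ) : ℝ) • y = (n : ℝ) • y + y := by push_cast; module
      rw [hrw, hadd _ _ h3 h1, ih y h2]; push_cast; ring
  -- comparison of scalings
  have hcomp2 : ∀ (N M : ℕ) (v : Euc d), 0 < N → 0 < M → ‖v‖ < N * ρ →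
      (N : ℝ) * g ((N : ℝ)⁻¹ • v) = ((N * M : ℕ) : ℝ) * g (((N * M : ℕ) : ℝ)⁻¹ • v) := by
    intro N M v hN hM hv
    have hN' : (0:ℝ) < N := by exact_mod_cast hN
    have hM' : (0:ℝ) < M := by exact_mod_cast hM
    have hrw : (N : ℝ)⁻¹ • v = (M : ℝ) • (((N * M : ℕ) : ℝ)⁻¹ • v) := by
      rw [smul_smul]; congr 1; push_cast; field_simp
    have hcond : (M : ℝ) * ‖((N * M : ℕ) : ℝ)⁻¹ • v‖ < ρ := by
      rw [norm_smul, norm_inv, Real.norm_natCast]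
      push_cast
      rw [show (M:ℝ) * ((↑N * ↑M)⁻¹ * ‖v‖) = ‖v‖ / N by field_simp]
      rw [div_lt_iff₀ hN']
      linarith [hv]
    rw [hrw, hscale M _ hcond]
    push_cast; ring
  have hcomp : ∀ (N M : ℕ) (v : Euc d), 0 < N → 0 < M → ‖v‖ < N * ρ → ‖v‖ < M * ρ →
      (N : ℝ) * g ((N : ℝ)⁻¹ • v) = (M : ℝ) * g ((M : ℝ)⁻¹ • v) := by
    intro N M v hN hM hvN hvM
    rw [hcomp2 N M v hN hM hvN, hcomp2 M N v hM hN hvM, Nat.mul_comm]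
  -- the global extension
  set Nf : Euc d → ℕ := fun v => ⌈‖v‖ / ρ⌉₊ + 1 with hNf
  have hNfpos : ∀ v, 0 < Nf v := fun v => Nat.succ_pos _
  have hNfv : ∀ v : Euc d, ‖v‖ < (Nf v) * ρ := by
    intro v
    have h1 : ‖v‖ / ρ ≤ ⌈‖v‖ / ρ⌉₊ := Nat.le_ceil _
    have : ‖v‖ / ρ < Nf v := by
      rw [hNf]; push_cast; linarith
    calc ‖v‖ = (‖v‖ / ρ) * ρ := by field_simp
    _ < (Nf v) * ρ := by apply mul_lt_mul_of_pos_right this hρ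
  set G : Euc d → ℝ := fun v => (Nf v : ℝ) * g ((Nf v : ℝ)⁻¹ • v) with hG
  have hGeq : ∀ (v : Euc d) (N : ℕ), 0 < N → ‖v‖ < N * ρ →
      G v = (N : ℝ) * g ((N : ℝ)⁻¹ • v) := by
    intro v N hN hv
    exact hcomp (Nf v) N v (hNfpos v) hN (hNfv v) hv
  have hGg : ∀ v : Euc d, ‖v‖ < ρ → G v = g v := by
    intro v hv
    have := hGeq v 1 Nat.one_pos (by simpa using hv)
    simpa using this
  have hGadd : ∀ v w : Euc d, G (v + w) = G v + G w := by
    intro v w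
    set K : ℕ := Nf v + Nf w + Nf (v + w) with hK
    have hKpos : 0 < K := by positivity
    have hKρ : ∀ u : Euc d, ‖u‖ < (Nf u) * ρ → Nf u ≤ K → ‖u‖ < K * ρ := by
      intro u h1 h2
      calc ‖u‖ < (Nf u) * ρ := h1
      _ ≤ K * ρ := by
        apply mul_le_mul_of_nonneg_right _ hρ.le
        exact_mod_cast h2
    have hv : ‖v‖ < K * ρ := hKρ v (hNfv v) (by omega)
    have hw : ‖w‖ < K * ρ := hKρ w (hNfv w) (by omega)
    have hvw : ‖v + w‖ < K * ρ := hKρ _ (hNfv _) (by omega)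
    have hK' : (0:ℝ) < K := by exact_mod_cast hKpos
    have hsmall : ∀ u : Euc d, ‖u‖ < K * ρ → ‖(K : ℝ)⁻¹ • u‖ < ρ := by
      intro u hu
      rw [norm_smul, norm_inv, Real.norm_natCast]
      rw [inv_mul_lt_iff₀ hK']
      linarith
    rw [hGeq (v + w) K hKpos hvw, hGeq v K hKpos hv, hGeq w K hKpos hw,
      smul_add, hadd _ _ (hsmall v hv) (hsmall w hw)]
    ring
  have hG0 : G 0 = 0 := by rw [hGg 0 (by simpa using hρ), hg0]
  have hGcont0 : ContinuousAt G 0 := by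
    apply hcont.congr
    filter_upwards [ball_mem_nhds (0 : Euc d) hρ] with y hy
    exact (hGg y (by simpa [dist_eq_norm] using hy)).symm
  have hGcont : Continuous G := by
    rw [continuous_iff_continuousAt]
    intro x
    have heq : G = fun y => G x + G (y - x) := by
      funext y
      rw [← hGadd x (y - x)]
      congr 1
      abel
    rw [heq]
    apply ContinuousAt.add continuousAt_const
    have h1 : ContinuousAt (fun y : Euc d => y - x) x :=
      (continuous_id.sub continuous_const).continuousAt
    have hcomp' : (fun y : Euc d => G (y - x)) = G ∘ (fun y : Euc d => y - x) := rfl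
    rw [hcomp']
    apply ContinuousAt.comp _ h1
    simpa using hGcont0
  set L : Euc d →L[ℝ] ℝ := (AddMonoidHom.mk' G hGadd).toRealLinearMap hGcont with hL
  refine ⟨(InnerProductSpace.toDual ℝ (Euc d)).symm L, fun y hy => ?_⟩
  rw [InnerProductSpace.toDual_symm_apply]
  have : L y = G y := by rw [hL]; rfl
  rw [this, hGg y hy]

lemma local_rep {d : ℕ} (Ω : Set (Euc d)) (hΩo : IsOpen Ω)
    (f : Euc d → ℝ) (hf : ContinuousOn f Ω)
    (hmid : ∀ x ∈ Ω, ∀ h : Euc d, ball x ‖h‖ ⊆ Ω → f x = (f (x + h) + f (x - h)) / 2)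
    (c : Euc d) (hc : c ∈ Ω) (ρ : ℝ) (hρ : 0 < ρ) (hball : ball c (2 * ρ) ⊆ Ω) :
    ∃ (a : ℝ) (b : Euc d), ∀ x ∈ ball c ρ, f x = a + ⟪b, x⟫ := by
  set g : Euc d → ℝ := fun y => f (c + y) - f c with hg
  have hfc : ContinuousAt f c := hf.continuousAt (hΩo.mem_nhds hc)
  have hcont : ContinuousAt g 0 := by
    apply ContinuousAt.sub _ continuousAt_const
    have h1 : ContinuousAt (fun y : Euc d => c + y) 0 :=
      (continuous_const.add continuous_id).continuousAt
    have : (fun y : Euc d => f (c + y)) = f ∘ (fun y : Euc d => c + y) := rfl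
    rw [this]
    apply ContinuousAt.comp _ h1
    simpa using hfc
  have hadd : ∀ y z : Euc d, ‖y‖ < ρ → ‖z‖ < ρ → g (y + z) = g y + g z := by
    intro y z hy hz
    set x := c + (2⁻¹ : ℝ) • (y + z) with hx
    have hxc : dist x c < ρ := by
      rw [hx, dist_eq_norm, add_sub_cancel_left, norm_smul]
      have : ‖y + z‖ ≤ ‖y‖ + ‖z‖ := norm_add_le y z
      rw [Real.norm_eq_abs]
      rw [abs_of_pos (by norm_num : (0:ℝ) < (2:ℝ)⁻¹)]
      nlinarith
    have hxΩ : x ∈ Ω := hball (by simp [mem_ball]; linarith)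
    have hsub : ∀ r : ℝ, r < ρ → ball x r ⊆ Ω := by
      intro r hr
      intro w hw
      apply hball
      rw [mem_ball] at hw ⊢
      calc dist w c ≤ dist w x + dist x c := dist_triangle w x c
      _ < r + ρ := by linarith
      _ ≤ 2 * ρ := by linarith
    have hn1 : ‖(2⁻¹ : ℝ) • (y - z)‖ < ρ := by
      rw [norm_smul, Real.norm_eq_abs, abs_of_pos (by norm_num : (0:ℝ) < (2:ℝ)⁻¹)]
      have : ‖y - z‖ ≤ ‖y‖ + ‖z‖ := norm_sub_le y z
      nlinarith
    have hn2 : ‖(2⁻¹ : ℝ) • (y + z)‖ < ρ := by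
      rw [norm_smul, Real.norm_eq_abs, abs_of_pos (by norm_num : (0:ℝ) < (2:ℝ)⁻¹)]
      have : ‖y + z‖ ≤ ‖y‖ + ‖z‖ := norm_add_le y z
      nlinarith
    have h1 := hmid x hxΩ ((2⁻¹ : ℝ) • (y - z)) (hsub _ hn1)
    have h2 := hmid x hxΩ ((2⁻¹ : ℝ) • (y + z)) (hsub _ hn2)
    have e1 : x + (2⁻¹ : ℝ) • (y - z) = c + y := by rw [hx]; module
    have e2 : x - (2⁻¹ : ℝ) • (y - z) = c + z := by rw [hx]; module
    have e3 : x + (2⁻¹ : ℝ) • (y + z) = c + (y + z) := by rw [hx]; module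
    have e4 : x - (2⁻¹ : ℝ) • (y + z) = c := by rw [hx]; module
    rw [e1, e2] at h1
    rw [e3, e4] at h2
    simp only [hg]
    linarith
  obtain ⟨b, hb⟩ := aux_linear ρ hρ g hcont hadd
  refine ⟨f c - ⟪b, c⟫, b, fun x hx => ?_⟩
  have hxc : ‖x - c‖ < ρ := by rw [← dist_eq_norm]; exact mem_ball.1 hx
  have := hb (x - c) hxc
  rw [hg] at this
  simp only [add_sub_cancel] at this
  rw [inner_sub_right] at this
  linarith

lemma affine_unique {d : ℕ} (z : Euc d) (ε : ℝ) (hε : 0 < ε) (a₁ a₂ : ℝ) (b₁ b₂ : Euc d)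
    (h : ∀ x ∈ ball z ε, a₁ + ⟪b₁, x⟫ = a₂ + ⟪b₂, x⟫) : a₁ = a₂ ∧ b₁ = b₂ := by
  set w : Euc d := b₁ - b₂ with hw
  have hz := h z (mem_ball_self hε)
  set t : ℝ := ε / (2 * (‖w‖ + 1)) with ht
  have hwn : (0:ℝ) ≤ ‖w‖ := norm_nonneg w
  have htpos : 0 < t := by positivity
  have hx₁ : z + t • w ∈ ball z ε := by
    rw [mem_ball, dist_eq_norm, add_sub_cancel_left, norm_smul, Real.norm_eq_abs,
      abs_of_pos htpos, ht]
    rw [div_mul_eq_mul_div, div_lt_iff₀ (by positivity)]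
    nlinarith
  have h1 := h _ hx₁
  rw [inner_add_right, inner_add_right, real_inner_smul_right, real_inner_smul_right] at h1
  have h2 : t * (⟪b₁, w⟫ - ⟪b₂, w⟫) = 0 := by linarith
  have h3 : ⟪b₁, w⟫ - ⟪b₂, w⟫ = 0 := by
    rcases mul_eq_zero.1 h2 with h | h
    · exact absurd h (ne_of_gt htpos)
    · exact h
  have h4 : ⟪w, w⟫ = (0:ℝ) := by rw [hw, inner_sub_left]; linarith
  have h5 : w = 0 := by rwa [inner_self_eq_zero] at h4
  have hb : b₁ = b₂ := by rwa [hw, sub_eq_zero] at h5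
  refine ⟨?_, hb⟩
  rw [hb] at hz
  linarith

theorem stmt_0' {d : ℕ} (Ω : Set (Euc d)) (hΩo : IsOpen Ω) (hΩc : IsConnected Ω)
    (f : Euc d → ℝ) (hf : ContinuousOn f Ω)
    (hmid : ∀ x ∈ Ω, ∀ h : Euc d, ball x ‖h‖ ⊆ Ω → f x = (f (x + h) + f (x - h)) / 2) :
    ∃ (a : ℝ) (b : Euc d), ∀ x ∈ Ω, f x = a + ⟪b, x⟫ := by
  have hloc : ∀ x ∈ Ω, ∃ ε > 0, ∃ (a : ℝ) (b : Euc d), ∀ y ∈ ball x ε, f y = a + ⟪b, y⟫ := by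
    intro x hx
    obtain ⟨r, hr, hrball⟩ := Metric.isOpen_iff.1 hΩo x hx
    obtain ⟨a, b, hab⟩ := local_rep Ω hΩo f hf hmid x hx (r / 2) (half_pos hr)
      (by rw [show 2 * (r / 2) = r by ring]; exact hrball)
    exact ⟨r / 2, half_pos hr, a, b, hab⟩
  obtain ⟨x₀, hx₀⟩ := hΩc.nonempty
  obtain ⟨ε₀, hε₀, a₀, b₀, h₀⟩ := hloc x₀ hx₀
  refine ⟨a₀, b₀, ?_⟩
  set S : Set (Euc d) := {x | ∃ ε > 0, ∀ y ∈ ball x ε, f y = a₀ + ⟪b₀, y⟫} with hS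
  set V : Set (Euc d) :=
    {x | ∃ ε > 0, ∃ (a : ℝ) (b : Euc d), (a, b) ≠ (a₀, b₀) ∧
      ∀ y ∈ ball x ε, f y = a + ⟪b, y⟫} with hV
  have ballsub : ∀ (x y : Euc d) (ε : ℝ), y ∈ ball x ε →
      ball y (ε - dist y x) ⊆ ball x ε := by
    intro x y ε hy
    apply ball_subset_ball'
    simp
  have hSopen : IsOpen S := by
    rw [Metric.isOpen_iff]
    rintro x ⟨ε, hε, hx⟩
    refine ⟨ε, hε, fun y hy => ?_⟩
    have hd : 0 < ε - dist y x := by rw [mem_ball] at hy; linarith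
    exact ⟨ε - dist y x, hd, fun z hz => hx z (ballsub x y ε hy hz)⟩
  have hVopen : IsOpen V := by
    rw [Metric.isOpen_iff]
    rintro x ⟨ε, hε, a, b, hne, hx⟩
    refine ⟨ε, hε, fun y hy => ?_⟩
    have hd : 0 < ε - dist y x := by rw [mem_ball] at hy; linarith
    exact ⟨ε - dist y x, hd, a, b, hne, fun z hz => hx z (ballsub x y ε hy hz)⟩
  have hSV : S ∩ V = ∅ := by
    rw [Set.eq_empty_iff_forall_notMem]
    rintro x ⟨⟨ε₁, hε₁, h1⟩, ⟨ε₂, hε₂, a, b, hne, h2⟩⟩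
    have hεm : 0 < min ε₁ ε₂ := lt_min hε₁ hε₂
    have key : ∀ y ∈ ball x (min ε₁ ε₂), a + ⟪b, y⟫ = a₀ + ⟪b₀, y⟫ := by
      intro y hy
      rw [← h2 y (ball_subset_ball (min_le_right _ _) hy),
        ← h1 y (ball_subset_ball (min_le_left _ _) hy)]
    obtain ⟨ha, hb⟩ := affine_unique x (min ε₁ ε₂) hεm a a₀ b b₀ key
    exact hne (by rw [ha, hb])
  have hcover : Ω ⊆ S ∪ V := by
    intro x hx
    obtain ⟨ε, hε, a, b, hab⟩ := hloc x hx
    by_cases hc : (a, b) = (a₀, b₀)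
    · left
      have ha : a = a₀ := congrArg Prod.fst hc
      have hb : b = b₀ := congrArg Prod.snd hc
      exact ⟨ε, hε, fun y hy => by rw [hab y hy, ha, hb]⟩
    · right
      exact ⟨ε, hε, a, b, hc, hab⟩
  have hΩS : (Ω ∩ S).Nonempty := ⟨x₀, hx₀, ⟨ε₀, hε₀, h₀⟩⟩
  have hΩV : Ω ∩ V = ∅ := by
    by_contra hne
    have hne' : (Ω ∩ V).Nonempty := Set.nonempty_iff_ne_empty.2 hne
    obtain ⟨z, hz⟩ := hΩc.isPreconnected S V hSopen hVopen hcover hΩS hne'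
    have : z ∈ S ∩ V := hz.2
    rw [hSV] at this
    exact this
  intro x hx
  have hxS : x ∈ S := by
    rcases hcover hx with h | h
    · exact h
    · exact absurd (Set.mem_inter hx h) (by rw [hΩV]; exact Set.notMem_empty x)
  obtain ⟨ε, hε, hrep⟩ := hxS
  exact hrep x (mem_ball_self hε)

/-- midpoint property on an open connected set implies affine. -/
theorem stmt_0 {d : ℕ} (Ω : Set (Euc d)) (hΩo : IsOpen Ω) (hΩc : IsConnected Ω)
    (f : Euc d → ℝ) (hf : ContinuousOn f Ω)
    (hmid : ∀ x ∈ Ω, ∀ h : Euc d, ball x ‖h‖ ⊆ Ω → f x = (f (x + h) + f (x - h)) / 2) :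
    ∃ (a : ℝ) (b : Euc d), ∀ x ∈ Ω, f x = a + ⟪b, x⟫ :=
  stmt_0' Ω hΩo hΩc f hf hmid
end
end

section
/- Let ω : [0,∞) → ℝ be nonnegative and strictly increasing, let A ⊆ ℝ^d be measurable with finite measure and A* = B_R(0) the centered ball with |A*| = |A|. If ∫_{A*} ω(|ξ|) dξ = ∫_A ω(|ξ|) dξ < ∞, then μ(A \ A*) = 0, i.e., A coincides with A* up to a null set. -/
open MeasureTheory Metric Filter
open scoped FourierTransform ENNReal NNReal Topology RealInnerProductSpace Convolution

noncomputable section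

/-- for a strictly increasing nonnegative radial profile, equality
`∫_{A*} ω(|ξ|) = ∫_A ω(|ξ|) < ∞` forces `μ(A \ A*) = 0`. -/
theorem stmt_3 {d : ℕ} (ω : ℝ → ℝ) (hω0 : ∀ r, 0 ≤ r → 0 ≤ ω r)
    (hmono : StrictMonoOn ω (Set.Ici 0))
    (A : Set (Euc d)) (hA : MeasurableSet A) (hAfin : volume A < ⊤)
    (R : ℝ) (hR : 0 ≤ R) (hvol : volume (ball (0 : Euc d) R) = volume A)
    (hfin : (∫⁻ ξ in A, ENNReal.ofReal (ω ‖ξ‖)) < ⊤)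
    (heq : (∫⁻ ξ in ball (0 : Euc d) R, ENNReal.ofReal (ω ‖ξ‖)) =
      ∫⁻ ξ in A, ENNReal.ofReal (ω ‖ξ‖)) :
    volume (A \ ball (0 : Euc d) R) = 0 := by
  set B := ball (0 : Euc d) R with hBdef
  have hBmeas : MeasurableSet B := measurableSet_ball
  -- measurability of the integrand
  have hgmono : Monotone (fun r : ℝ => ω (max r 0)) := by
    intro a b hab
    exact hmono.monotoneOn (le_max_right a 0) (le_max_right b 0) (max_le_max hab le_rfl)
  have hmeas : Measurable (fun ξ : Euc d => ENNReal.ofReal (ω ‖ξ‖)) := by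
    have h1 : Measurable fun ξ : Euc d => ω (max ‖ξ‖ 0) :=
      hgmono.measurable.comp measurable_norm
    have h2 : (fun ξ : Euc d => ω (max ‖ξ‖ 0)) = fun ξ : Euc d => ω ‖ξ‖ := by
      funext ξ; rw [max_eq_left (norm_nonneg ξ)]
    exact ENNReal.measurable_ofReal.comp (h2 ▸ h1)
  set f : Euc d → ℝ≥0∞ := fun ξ => ENNReal.ofReal (ω ‖ξ‖) with hf
  -- measures of the two "difference" pieces agree
  have hBfin : volume B < ⊤ := hvol ▸ hAfin
  have hIABfin : volume (A ∩ B) ≠ ⊤ :=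
    (lt_of_le_of_lt (measure_mono Set.inter_subset_left) hAfin).ne
  have hm2fin : volume (B \ A) < ⊤ :=
    lt_of_le_of_lt (measure_mono Set.diff_subset) hBfin
  have hmeq : volume (A \ B) = volume (B \ A) := by
    have h1 : volume (A ∩ B) + volume (A \ B) = volume A := measure_inter_add_diff A hBmeas
    have h2 : volume (B ∩ A) + volume (B \ A) = volume B := measure_inter_add_diff B hA
    rw [Set.inter_comm, hvol, ← h1] at h2
    exact ((ENNReal.add_right_inj hIABfin).mp h2).symm
  -- integrals over the two pieces agree
  have hJfin : (∫⁻ ξ in A ∩ B, f ξ) ≠ ⊤ := by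
    refine (lt_of_le_of_lt ?_ hfin).ne
    exact lintegral_mono_set Set.inter_subset_left
  have hIeq : (∫⁻ ξ in A \ B, f ξ) = ∫⁻ ξ in B \ A, f ξ := by
    have h1 : (∫⁻ ξ in A ∩ B, f ξ) + ∫⁻ ξ in A \ B, f ξ = ∫⁻ ξ in A, f ξ :=
      lintegral_inter_add_diff f A hBmeas
    have h2 : (∫⁻ ξ in B ∩ A, f ξ) + ∫⁻ ξ in B \ A, f ξ = ∫⁻ ξ in B, f ξ :=
      lintegral_inter_add_diff f B hA
    rw [Set.inter_comm, heq, ← h1] at h2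
    exact ((ENNReal.add_right_inj hJfin).mp h2).symm
  -- lower bound on the A \ B piece
  have hlow : ENNReal.ofReal (ω R) * volume (A \ B) ≤ ∫⁻ ξ in A \ B, f ξ := by
    rw [← setLIntegral_const (A \ B) (ENNReal.ofReal (ω R))]
    refine setLIntegral_mono' (hA.diff hBmeas) fun ξ hξ => ?_
    have hnorm : R ≤ ‖ξ‖ := by
      have := hξ.2
      simpa [hBdef, mem_ball, dist_eq_norm, not_lt] using this
    exact ENNReal.ofReal_le_ofReal
      (hmono.monotoneOn hR (le_trans hR hnorm) hnorm)
  -- upper bound on the B \ A piece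
  have hup : (∫⁻ ξ in B \ A, f ξ) ≤ ENNReal.ofReal (ω R) * volume (B \ A) := by
    rw [← setLIntegral_const (B \ A) (ENNReal.ofReal (ω R))]
    refine setLIntegral_mono' (hBmeas.diff hA) fun ξ hξ => ?_
    have hnorm : ‖ξ‖ < R := by
      have := hξ.1
      simpa [hBdef, mem_ball, dist_eq_norm] using this
    exact ENNReal.ofReal_le_ofReal
      (hmono.monotoneOn (norm_nonneg ξ) hR hnorm.le)
  -- hence equality on the B \ A piece
  have hI2fin : (∫⁻ ξ in B \ A, f ξ) ≠ ⊤ := by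
    refine (lt_of_le_of_lt ?_ (heq ▸ hfin)).ne
    exact lintegral_mono_set Set.diff_subset
  have hIconst : (∫⁻ ξ in B \ A, f ξ) = ENNReal.ofReal (ω R) * volume (B \ A) := by
    refine le_antisymm hup ?_
    calc ENNReal.ofReal (ω R) * volume (B \ A)
        = ENNReal.ofReal (ω R) * volume (A \ B) := by rw [hmeq]
      _ ≤ ∫⁻ ξ in A \ B, f ξ := hlow
      _ = ∫⁻ ξ in B \ A, f ξ := hIeq
  -- conclude volume (B \ A) = 0
  have hzero : volume (B \ A) = 0 := by
    have hle : f ≤ᵐ[volume.restrict (B \ A)] fun _ => ENNReal.ofReal (ω R) := by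
      refine (ae_restrict_iff' (hBmeas.diff hA)).mpr (Filter.Eventually.of_forall ?_)
      intro ξ hξ
      have hnorm : ‖ξ‖ < R := by
        have := hξ.1
        simpa [hBdef, mem_ball, dist_eq_norm] using this
      exact ENNReal.ofReal_le_ofReal
        (hmono.monotoneOn (norm_nonneg ξ) hR hnorm.le)
    have hsub : (∫⁻ ξ in B \ A, ((fun _ => ENNReal.ofReal (ω R)) ξ - f ξ)) = 0 := by
      rw [lintegral_sub hmeas hI2fin hle, setLIntegral_const, hIconst, tsub_self]
    have hae := (lintegral_eq_zero_iff ((measurable_const).sub hmeas)).mp hsub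
    have hsubset : B \ A ⊆ {ξ : Euc d | ENNReal.ofReal (ω R) - f ξ ≠ 0} := by
      intro ξ hξ
      have hnorm : ‖ξ‖ < R := by
        have := hξ.1
        simpa [hBdef, mem_ball, dist_eq_norm] using this
      have hlt : ω ‖ξ‖ < ω R := hmono (norm_nonneg ξ) hR hnorm
      have h0 : 0 < ω R := lt_of_le_of_lt (hω0 _ (norm_nonneg ξ)) hlt
      have : f ξ < ENNReal.ofReal (ω R) :=
        (ENNReal.ofReal_lt_ofReal_iff h0).mpr hlt
      simp only [Set.mem_setOf_eq]
      exact (tsub_pos_of_lt this).ne'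
    have : volume.restrict (B \ A) {ξ : Euc d | ENNReal.ofReal (ω R) - f ξ ≠ 0} = 0 := by
      have := hae
      rwa [Filter.EventuallyEq, ae_iff] at this
    refine le_antisymm ?_ zero_le
    calc volume (B \ A) = volume.restrict (B \ A) (B \ A) := by
          rw [Measure.restrict_apply_self]
      _ ≤ volume.restrict (B \ A) {ξ : Euc d | ENNReal.ofReal (ω R) - f ξ ≠ 0} :=
          measure_mono hsubset
      _ = 0 := this
  rw [hmeq]; exact hzero
end
end
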